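/- Let f : ℝ → ℝ be nondecreasing and Lipschitz continuous, and let B ⊆ ℝ be a set of Lebesgue measure zero. Then for Lebesgue-almost every x ∈ f⁻¹(B), f is differentiable at x and f'(x) = 0. -/

import Mathlib

open MeasureTheory

/-- If `f : ℝ → ℝ` is nondecreasing and Lipschitz and `B ⊆ ℝ` has
Lebesgue measure zero, then for Lebesgue-a.e. `x ∈ f ⁻¹' B`, `f` is differentiable
at `x` with derivative `0`. -/
theorem monotone_lipschitz_deriv_zero_on_preimage_null
    (f : ℝ → ℝ) (K : NNReal) (hmono : Monotone f) (hlip : LipschitzWith K f)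
    (B : Set ℝ) (hB : volume B = 0) :
    ∀ᵐ x ∂(volume.restrict (f ⁻¹' B)), HasDerivAt f 0 x := by
  obtain ⟨G, hBG, hGm, hG0⟩ := exists_measurable_superset_of_null hB
  have hf_meas : Measurable f := hmono.measurable
  have hA : MeasurableSet (f ⁻¹' G) := hf_meas hGm
  -- the "bad" set: points of the preimage where f has positive derivative
  set s : Set ℝ := f ⁻¹' G ∩ {x | DifferentiableAt ℝ f x ∧ 0 < deriv f x} with hs_def
  have hs : MeasurableSet s := by
    apply hA.inter
    exact (measurableSet_of_differentiableAt ℝ f).inter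
      (measurableSet_lt measurable_const (measurable_deriv f))
  -- if f takes equal values at x < y, the derivative at x (if it exists) is 0
  have hzero : ∀ x y : ℝ, x < y → f x = f y → DifferentiableAt ℝ f x → deriv f x = 0 := by
    intro x y h hxy hdx
    have hconst : ∀ t ∈ Set.Icc x y, f t = f x := fun t ht =>
      le_antisymm (hxy ▸ hmono ht.2) (hmono ht.1)
    have h1 : HasDerivWithinAt f 0 (Set.Icc x y) x :=
      (hasDerivWithinAt_const x (Set.Icc x y) (f x)).congr hconst (hconst x ⟨le_rfl, h.le⟩)
    have h2 : HasDerivWithinAt f (deriv f x) (Set.Icc x y) x :=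
      hdx.hasDerivAt.hasDerivWithinAt
    have hu := (uniqueDiffOn_Icc h) x ⟨le_rfl, h.le⟩
    rw [← h1.derivWithin hu, h2.derivWithin hu]
  -- f is injective on s
  have hinj : Set.InjOn f s := by
    intro x hx y hy hxy
    by_contra hne
    rcases lt_or_gt_of_ne hne with h | h
    · exact absurd ((hzero x y h hxy hx.2.1) ▸ hx.2.2) (lt_irrefl 0)
    · exact absurd ((hzero y x h hxy.symm hy.2.1) ▸ hy.2.2) (lt_irrefl 0)
  have hderiv : ∀ x ∈ s, HasDerivWithinAt f (deriv f x) s x :=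
    fun x hx => hx.2.1.hasDerivAt.hasDerivWithinAt
  -- the change-of-variables inequality bounds the integral of |f'| over s by the measure
  -- of the image f '' s ⊆ G, which is null
  have hkey : (∫⁻ x in s, ENNReal.ofReal |deriv f x| ∂volume) ≤ volume (f '' s) := by
    simpa only [ContinuousLinearMap.det_toSpanSingleton] using
      lintegral_abs_det_fderiv_le_addHaar_image volume hs
        (fun x hx => (hderiv x hx).hasFDerivWithinAt) hinj
  have himg : volume (f '' s) = 0 :=
    measure_mono_null (by rintro _ ⟨x, hx, rfl⟩; exact hx.1) hG0
  have hint0 : (∫⁻ x in s, ENNReal.ofReal |deriv f x| ∂volume) = 0 :=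
    le_antisymm (himg ▸ hkey) zero_le
  -- hence s is a null set
  have hs0 : volume s = 0 := by
    have hmeas : Measurable fun x => ENNReal.ofReal |deriv f x| :=
      (measurable_deriv f).abs.ennreal_ofReal
    have h := (lintegral_eq_zero_iff hmeas).mp hint0
    have h3 : ∀ᵐ x ∂(volume.restrict s), False := by
      filter_upwards [h, ae_restrict_mem hs] with x hx hxs
      have hpos : 0 < deriv f x := hxs.2.2
      simp only [Pi.zero_apply, ENNReal.ofReal_eq_zero, abs_nonpos_iff] at hx
      exact absurd (hx ▸ hpos) (lt_irrefl 0)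
    rw [← Measure.restrict_eq_zero]
    exact ae_eq_bot.mp (Filter.eventually_false_iff_eq_bot.mp h3)
  -- combine everything
  have main : ∀ᵐ x ∂(volume.restrict (f ⁻¹' G)), HasDerivAt f 0 x := by
    have h1 : ∀ᵐ x ∂(volume.restrict (f ⁻¹' G)), DifferentiableAt ℝ f x :=
      ae_restrict_of_ae hmono.ae_differentiableAt
    have h2 : ∀ᵐ x ∂(volume.restrict (f ⁻¹' G)), x ∉ s :=
      ae_restrict_of_ae (measure_eq_zero_iff_ae_notMem.mp hs0)
    filter_upwards [h1, h2, ae_restrict_mem hA] with x hdx hxs hxA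
    have hnn : 0 ≤ deriv f x := by
      have ht : Filter.Tendsto (slope f x) (nhdsWithin x (Set.Ioi x)) (nhds (deriv f x)) :=
        (hasDerivAt_iff_tendsto_slope.mp hdx.hasDerivAt).mono_left
          (nhdsWithin_mono x (fun y hy => Set.mem_compl_singleton_iff.mpr (ne_of_gt hy)))
      refine ge_of_tendsto ht ?_
      filter_upwards [self_mem_nhdsWithin] with y hy
      rw [slope_def_field]
      exact div_nonneg (sub_nonneg.2 (hmono (le_of_lt hy))) (sub_nonneg.2 (le_of_lt hy))
    have hd0 : deriv f x = 0 := by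
      by_contra hne
      exact hxs ⟨hxA, hdx, lt_of_le_of_ne hnn (Ne.symm hne)⟩
    exact hd0 ▸ hdx.hasDerivAt
  exact ae_mono (Measure.restrict_mono (Set.preimage_mono hBG) le_rfl) main
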